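/- Let L be an uncountable linear order and T a tree ordering ⊴ on L. Define the lexicographic-like linear order ⪯ derived from ⊴ together with indices as in a Suslin-line-from-tree construction (x ⪯ y iff x ⊴ y, or x and y are ⊴-incomparable and n(min{z ⊴ x : z ⋬ y}) > n(min{z ⊴ y : z ⋬ x})). If every countable subset D ⊆ L is contained in some initial segment α × ω of the tree and the tree has the property that every node has infinitely many immediate successors and every node extends to every higher level, then (L, ⪯) is non-separable. -/

import Mathlib

open Cardinal

/-- Countable ordinals: indices of levels. -/
abbrev Idx := {o : Ordinal // o < (Cardinal.aleph 1).ord}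

/-- Nodes of the tree: `(α, k) ∈ ω₁ × ω`, with height `α` and index `k`. -/
abbrev Node := Idx × ℕ

/-- `tle` is a tree ordering on `ω₁ × ω` whose `α`-th level is `{α} × ω`. -/
structure IsTreeOrder (tle : Node → Node → Prop) : Prop where
  refl : ∀ x, tle x x
  antisymm : ∀ x y, tle x y → tle y x → x = y
  trans : ∀ x y z, tle x y → tle y z → tle x z
  ht_mono : ∀ x y, tle x y → x.1.1 ≤ y.1.1
  pred_exists : ∀ (y : Node) (α : Idx), α.1 ≤ y.1.1 → ∃ k : ℕ, tle (α, k) y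
  pred_linear : ∀ x y z, tle x z → tle y z → (tle x y ∨ tle y x)

/-- The lexicographic-like linearization of a tree ordering: `x ⪯ y` iff
`x ⊴ y`, or `x ⊥ y` and the `⊴`-least predecessor `u` of `x` not below `y`
has larger `n`-index than the `⊴`-least predecessor `v` of `y` not below `x`. -/
def LexLike (tle : Node → Node → Prop) (x y : Node) : Prop :=
  tle x y ∨ (¬tle x y ∧ ¬tle y x ∧ ∃ u v : Node,
    tle u x ∧ ¬tle u y ∧ (∀ w, tle w x → ¬tle w y → tle u w) ∧
    tle v y ∧ ¬tle v x ∧ (∀ w, tle w y → ¬tle w x → tle v w) ∧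
    v.2 < u.2)

/-- The strict version of the linearization. -/
def LexLt (tle : Node → Node → Prop) (x y : Node) : Prop :=
  LexLike tle x y ∧ x ≠ y

/-- If every node has infinitely many immediate successors, every node extends to
every higher level, and every countable set of nodes lies in an initial segment
`α × ω`, then the lexicographic-like linearization is non-separable: every
countable `D` misses some nonempty open interval. -/
theorem lexLike_nonseparable (tle : Node → Node → Prop) (htree : IsTreeOrder tle)
    (hsucc : ∀ (x : Node) (β : Idx), β.1 = Order.succ x.1.1 →
      {m : ℕ | tle x (β, m)}.Infinite)
    (hext : ∀ (x : Node) (β : Idx), x.1.1 ≤ β.1 → ∃ m : ℕ, tle x (β, m))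
    (hbound : ∀ D : Set Node, D.Countable → ∃ α : Idx, ∀ x ∈ D, x.1.1 < α.1) :
    ∀ D : Set Node, D.Countable →
      ∃ a b : Node, (∃ c : Node, LexLt tle a c ∧ LexLt tle c b) ∧
        ∀ d ∈ D, ¬(LexLt tle a d ∧ LexLt tle d b) := by
  intro D hD
  have hlim : Order.IsSuccLimit (Cardinal.aleph 1).ord :=
    Cardinal.isSuccLimit_ord (Cardinal.aleph0_le_aleph 1)
  -- a countable set of nodes is bounded in height (regularity of ℵ₁)
  obtain ⟨α, hα⟩ : ∃ α : Idx, ∀ y ∈ D, y.1.1 < α.1 := by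
    set z : Node := (⟨0, hlim.pos⟩, 0) with hz
    obtain ⟨f, hf⟩ := (hD.insert z).exists_eq_range (Set.insert_nonempty _ _)
    set g : ℕ → Ordinal := fun n => Order.succ (f n).1.1 with hg
    have hglt : ∀ n, g n < (Cardinal.aleph 1).ord := fun n => hlim.succ_lt (f n).1.2
    have hsup : iSup g < (Cardinal.aleph 1).ord :=
      Cardinal.iSup_lt_ord_lift_of_isRegular Cardinal.isRegular_aleph_one
        (by rw [Cardinal.mk_nat, Cardinal.lift_aleph0]; exact Cardinal.aleph0_lt_aleph_one) hglt
    refine ⟨⟨iSup g, hsup⟩, fun y hy => ?_⟩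
    have : y ∈ Set.range f := hf ▸ Set.mem_insert_of_mem z hy
    obtain ⟨n, rfl⟩ := this
    exact lt_of_lt_of_le (Order.lt_succ _) (Ordinal.le_iSup g n)
  let β1 : Idx := ⟨Order.succ α.1, hlim.succ_lt α.2⟩
  let β2 : Idx := ⟨Order.succ β1.1, hlim.succ_lt β1.2⟩
  let β3 : Idx := ⟨Order.succ β2.1, hlim.succ_lt β2.2⟩
  let x : Node := (α, 0)
  obtain ⟨m1, hxa⟩ := hext x β1 (Order.le_succ α.1)
  set a : Node := (β1, m1) with ha
  obtain ⟨m2, hac⟩ := hext a β2 (Order.le_succ β1.1)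
  set c : Node := (β2, m2) with hc
  obtain ⟨m3, hcb⟩ := hext c β3 (Order.le_succ β2.1)
  set b : Node := (β3, m3) with hb
  have hane : a ≠ c := by
    intro h
    have : β1.1 = β2.1 := congrArg (fun n : Node => n.1.1) h
    exact absurd this (ne_of_lt (Order.lt_succ β1.1))
  have hcne : c ≠ b := by
    intro h
    have : β2.1 = β3.1 := congrArg (fun n : Node => n.1.1) h
    exact absurd this (ne_of_lt (Order.lt_succ β2.1))
  refine ⟨a, b, ⟨c, ⟨Or.inl hac, hane⟩, ⟨Or.inl hcb, hcne⟩⟩, ?_⟩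
  intro d hd hcontra
  have hdht : d.1.1 < α.1 := hα d hd
  have hxb : tle x b := htree.trans _ _ _ hxa (htree.trans _ _ _ hac hcb)
  have hxd : ¬ tle x d := fun h => absurd (htree.ht_mono x d h) (not_le.2 hdht)
  have h1 := hcontra.1.1
  have h2 := hcontra.2.1
  rcases h1 with h1 | ⟨hnad, hnda, u, v, hua, hud, humin, hvd, hva, hvmin, hvu⟩
  · -- tle a d : impossible by heights
    have hle := htree.ht_mono a d h1
    exact absurd hdht (not_lt.2 (le_trans (Order.le_succ α.1) hle))
  rcases h2 with h2 | ⟨hndb, hnbd, u', v', hu'd, hu'b, hu'min, hv'b, hv'd, hv'min, hv'u'⟩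
  · -- tle d b : then d ⊴ x, so d ⊴ a, contradiction
    rcases htree.pred_linear d x b h2 hxb with h' | h'
    · exact hnda (htree.trans _ _ _ h' hxa)
    · exact hxd h'
  · have hu'a : ¬ tle u' a := by
      intro h
      rcases htree.pred_linear u' x a h hxa with h' | h'
      · exact hu'b (htree.trans _ _ _ h' hxb)
      · exact hxd (htree.trans _ _ _ h' hu'd)
    have hvb : ¬ tle v b := by
      intro h
      rcases htree.pred_linear v x b h hxb with h' | h'
      · exact hva (htree.trans _ _ _ h' hxa)
      · exact hxd (htree.trans _ _ _ h' hvd)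
    have hveq : v = u' :=
      htree.antisymm _ _ (hvmin u' hu'd hu'a) (hu'min v hvd hvb)
    have hux : tle u x := humin x hxa hxd
    have hv'x : tle v' x := hv'min x hxb hxd
    have hueq : u = v' :=
      htree.antisymm _ _ (humin v' (htree.trans _ _ _ hv'x hxa) hv'd)
        (hv'min u (htree.trans _ _ _ hux hxb) hud)
    rw [hveq, hueq] at hvu
    exact absurd hv'u' (lt_asymm hvu)
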